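/- Define γ : ℂ² → ℂ by γ(z₁,z₂) = z₁z₂/|z₁| when |z₁| ≥ |z₂| (with γ(0,0) = 0) and γ(z₁,z₂) = z₁z₂/|z₂| when |z₁| < |z₂|. Then: (i) γ is continuous on all of ℂ²; (ii) |γ(z₁,z₂)| = min(|z₁|, |z₂|) for all (z₁,z₂); (iii) γ is invariant under the S¹ action: γ(e^{iθ}·z₁, e^{−iθ}·z₂) = γ(z₁,z₂) for all θ ∈ ℝ; and (iv) γ commutes with conjugation: γ(conj z₁, conj z₂) = conj(γ(z₁,z₂)). -/

import Mathlib

/-- The `S¹`-invariant piecewise smooth map `γ(z₁,z₂) = z₁z₂/|z₁|` for `|z₁| ≥ |z₂|`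
and `z₁z₂/|z₂|` for `|z₁| < |z₂|` (division by zero yields `0`, so `γ(0,0) = 0`). -/
noncomputable def gam (z : ℂ × ℂ) : ℂ :=
  if ‖z.2‖ ≤ ‖z.1‖ then z.1 * z.2 / (‖z.1‖ : ℂ)
  else z.1 * z.2 / (‖z.2‖ : ℂ)

lemma gam_eq (z : ℂ × ℂ) :
    gam z = z.1 * z.2 / ((max (‖z.1‖) (‖z.2‖) : ℝ) : ℂ) := by
  unfold gam
  split <;> rename_i h
  · rw [max_eq_left h]
  · rw [max_eq_right (le_of_lt (not_le.1 h))]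

lemma gam_abs (z : ℂ × ℂ) :
    ‖gam z‖ = min ‖z.1‖ ‖z.2‖ := by
  rw [gam_eq]
  set a := ‖z.1‖ with ha
  set b := ‖z.2‖ with hb
  have ha0 : 0 ≤ a := norm_nonneg _
  have hb0 : 0 ≤ b := norm_nonneg _
  rw [norm_div, norm_mul, Complex.norm_real, Real.norm_of_nonneg (le_max_of_le_left ha0)]
  rcases le_total a b with h | h
  · rw [max_eq_right h, min_eq_left h]
    rcases eq_or_lt_of_le hb0 with h0 | h0
    · have : a = 0 := le_antisymm (h.trans h0.symm.le) ha0
      simp [this, ← h0]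
    · field_simp
      exact mul_comm _ _
  · rw [max_eq_left h, min_eq_right h]
    rcases eq_or_lt_of_le ha0 with h0 | h0
    · have : b = 0 := le_antisymm (h.trans h0.symm.le) hb0
      simp [this, ← h0]
    · field_simp
      rfl

/-- `γ` is continuous, `|γ| = min(|z₁|,|z₂|)`, `γ` is `S¹`-invariant, and
`γ` commutes with complex conjugation. -/
theorem stmt16 :
    Continuous gam ∧
    (∀ z : ℂ × ℂ, ‖(gam z)‖ = min (‖z.1‖) (‖z.2‖)) ∧
    (∀ θ : ℝ, ∀ z : ℂ × ℂ,
      gam (Complex.exp (Complex.I * (θ : ℂ)) * z.1,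
           Complex.exp (-(Complex.I * (θ : ℂ))) * z.2) = gam z) ∧
    (∀ z : ℂ × ℂ, gam ((starRingEnd ℂ) z.1, (starRingEnd ℂ) z.2)
        = (starRingEnd ℂ) (gam z)) := by
  refine ⟨?_, gam_abs, ?_, ?_⟩
  · rw [continuous_iff_continuousAt]
    intro z
    by_cases hz : z = (0, 0)
    · subst hz
      have h00 : gam (0, 0) = 0 := by simp [gam]
      rw [ContinuousAt, h00]
      rw [tendsto_zero_iff_norm_tendsto_zero]
      refine squeeze_zero (g := fun w : ℂ × ℂ => ‖w.1‖)
        (fun w => norm_nonneg _) (fun w => ?_) ?_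
      · rw [gam_abs]
        exact min_le_left _ _
      · have : Continuous fun w : ℂ × ℂ => ‖w.1‖ :=
          continuous_norm.comp continuous_fst
        have h := this.tendsto ((0 : ℂ), (0 : ℂ))
        simpa using h
    · have hfun : gam = fun w : ℂ × ℂ =>
          w.1 * w.2 / ((max (‖w.1‖) (‖w.2‖) : ℝ) : ℂ) :=
        funext gam_eq
      rw [hfun]
      have hmax : (0 : ℝ) < max (‖z.1‖) (‖z.2‖) := by
        by_contra hc
        push_neg at hc
        have h1 : ‖z.1‖ = 0 :=
          le_antisymm ((le_max_left _ _).trans hc) (norm_nonneg _)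
        have h2 : ‖z.2‖ = 0 :=
          le_antisymm ((le_max_right _ _).trans hc) (norm_nonneg _)
        exact hz (Prod.ext (norm_eq_zero.1 h1) (norm_eq_zero.1 h2))
      have hden : Continuous fun w : ℂ × ℂ =>
          ((max (‖w.1‖) (‖w.2‖) : ℝ) : ℂ) :=
        Complex.continuous_ofReal.comp
          ((continuous_norm.comp continuous_fst).max
            (continuous_norm.comp continuous_snd))
      exact ((continuous_fst.mul continuous_snd).continuousAt).div
        hden.continuousAt (by
          simp only [ne_eq, Complex.ofReal_eq_zero]
          exact ne_of_gt hmax)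
  · intro θ z
    have he : Complex.exp (Complex.I * θ) * Complex.exp (-(Complex.I * θ)) = 1 := by
      rw [← Complex.exp_add, add_neg_cancel, Complex.exp_zero]
    have h1 : ‖Complex.exp (Complex.I * θ) * z.1‖ = ‖z.1‖ := by
      rw [norm_mul, Complex.norm_exp]
      simp
    have h2 : ‖Complex.exp (-(Complex.I * θ)) * z.2‖ = ‖z.2‖ := by
      rw [norm_mul, Complex.norm_exp]
      simp
    rw [gam_eq, gam_eq]
    simp only [h1, h2]
    congr 1
    calc Complex.exp (Complex.I * θ) * z.1 * (Complex.exp (-(Complex.I * θ)) * z.2)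
        = Complex.exp (Complex.I * θ) * Complex.exp (-(Complex.I * θ)) * (z.1 * z.2) := by ring
      _ = z.1 * z.2 := by rw [he, one_mul]
  · intro z
    rw [gam_eq, gam_eq]
    simp only [Complex.norm_conj]
    rw [map_div₀, map_mul, Complex.conj_ofReal]
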